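/- Let 1 ≤ l < k ≤ n be integers and let H > h ≥ 0 be real numbers; set ℋ := (k−l)/(2(H−h)). For α > 0, β ∈ ℝ, s̄ > 0, let w(s) := β + ∫_{s̄}^s v_α(t) dt on (0,∞). Then w ∈ C²((0,∞)), w'(s) > 1 > 0 and w''(s) < 0 for all s > 0, and w satisfies the ordinary differential equation (w'(s))^k + 2 w''(s) (w'(s))^{k−1} H s − (w'(s))^l − 2 w''(s) (w'(s))^{l−1} h s = 0 for all s > 0. -/

import Mathlib

open scoped BigOperators
open Filter MeasureTheory Set

noncomputable section

/-- Euclidean `n`-space `ℝⁿ`. -/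
abbrev En (n : ℕ) : Type := EuclideanSpace ℝ (Fin n)

/-- `σ_k(a)`: the `k`-th elementary symmetric polynomial of `a : Fin n → ℝ`. -/
def esym (n k : ℕ) (a : Fin n → ℝ) : ℝ :=
  ∑ t ∈ Finset.powersetCard k (Finset.univ : Finset (Fin n)), ∏ i ∈ t, a i

/-- `σ_{k;i}(a) := σ_k(a)|_{a_i = 0}`. -/
def esymDel (n k : ℕ) (a : Fin n → ℝ) (i : Fin n) : ℝ :=
  esym n k (Function.update a i 0)

/-- `H_k(a) = max_{1 ≤ i ≤ n} σ_{k-1;i}(a) a_i / σ_k(a)`. -/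
def Hfun (n k : ℕ) (a : Fin n → ℝ) : ℝ :=
  ⨆ i : Fin n, esymDel n (k - 1) a i * a i / esym n k a

/-- `h_l(a) = min_{1 ≤ i ≤ n} σ_{l-1;i}(a) a_i / σ_l(a)`, with `h_0 = 0`. -/
def hfun (n l : ℕ) (a : Fin n → ℝ) : ℝ :=
  if l = 0 then 0 else ⨅ i : Fin n, esymDel n (l - 1) a i * a i / esym n l a

/-- The Hessian matrix `D²u(x)` of a function `u : ℝⁿ → ℝ`. -/
def hess {n : ℕ} (u : En n → ℝ) (x : En n) : Matrix (Fin n) (Fin n) ℝ :=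
  Matrix.of fun i j =>
    fderiv ℝ (fun y => fderiv ℝ u y (EuclideanSpace.single j 1)) x (EuclideanSpace.single i 1)

/-- `σ_k(λ(M))`: the `k`-th elementary symmetric function of the eigenvalues of `M`,
expressed via the coefficients of the characteristic polynomial. -/
def sigmaEig {n : ℕ} (k : ℕ) (M : Matrix (Fin n) (Fin n) ℝ) : ℝ :=
  (-1 : ℝ) ^ k * M.charpoly.coeff (n - k)

/-- The Hessian quotient operator `S_{k,l}(M) = σ_k(λ(M))/σ_l(λ(M))`. -/
def Skl {n : ℕ} (k l : ℕ) (M : Matrix (Fin n) (Fin n) ℝ) : ℝ :=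
  sigmaEig k M / sigmaEig l M

/-- The Garding cone `Γ_k = {λ : σ_j(λ) > 0, 1 ≤ j ≤ k}`. -/
def GammaCone (n k : ℕ) : Set (Fin n → ℝ) :=
  {lam | ∀ j : ℕ, 1 ≤ j → j ≤ k → 0 < esym n j lam}

/-- `ψ` is `k`-convex at `x`: the (symmetric) Hessian has eigenvalue vector in `closure Γ_k`. -/
def KConvexAt (n k : ℕ) (ψ : En n → ℝ) (x : En n) : Prop :=
  ∃ hsym : (hess ψ x).IsHermitian, hsym.eigenvalues ∈ closure (GammaCone n k)

/-- Viscosity subsolution of `S_{k,l}(D²u) = 1` on `Ω`. -/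
def ViscSubOn (n k l : ℕ) (Ω : Set (En n)) (u : En n → ℝ) : Prop :=
  UpperSemicontinuousOn u Ω ∧
  ∀ ψ : En n → ℝ, ContDiffOn ℝ 2 ψ Ω → (∀ x ∈ Ω, KConvexAt n k ψ x) →
    ∀ x₀ ∈ Ω, ψ x₀ = u x₀ → (∀ x ∈ Ω, u x ≤ ψ x) → 1 ≤ Skl k l (hess ψ x₀)

/-- Viscosity supersolution of `S_{k,l}(D²u) = 1` on `Ω`. -/
def ViscSupOn (n k l : ℕ) (Ω : Set (En n)) (u : En n → ℝ) : Prop :=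
  LowerSemicontinuousOn u Ω ∧
  ∀ ψ : En n → ℝ, ContDiffOn ℝ 2 ψ Ω → (∀ x ∈ Ω, KConvexAt n k ψ x) →
    ∀ x₀ ∈ Ω, ψ x₀ = u x₀ → (∀ x ∈ Ω, ψ x ≤ u x) → Skl k l (hess ψ x₀) ≤ 1

/-- Viscosity solution of the exterior Dirichlet problem
`S_{k,l}(D²u) = 1` in `ℝⁿ ∖ D̄`, `u = φ` on `∂D`, `u ∈ C⁰(ℝⁿ ∖ D)`. -/
def ExtViscSolution (n k l : ℕ) (D : Set (En n)) (φ u : En n → ℝ) : Prop :=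
  ContinuousOn u Dᶜ ∧
  ViscSubOn n k l (closure D)ᶜ u ∧
  ViscSupOn n k l (closure D)ᶜ u ∧
  ∀ x ∈ frontier D, u x = φ x

/-- A smooth, bounded, strictly convex open set. -/
structure SmoothStrictlyConvexDomain (n : ℕ) (D : Set (En n)) : Prop where
  isOpen : IsOpen D
  nonempty : D.Nonempty
  bounded : Bornology.IsBounded D
  strictConvex : StrictConvex ℝ D
  smoothBoundary : ∃ f : En n → ℝ, ContDiff ℝ (⊤ : ℕ∞) f ∧ D = {x | f x < 0} ∧
    ∀ x ∈ frontier D, fderiv ℝ f x ≠ 0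

/-- `½ xᵀ A x`. -/
def quadForm {n : ℕ} (A : Matrix (Fin n) (Fin n) ℝ) (x : En n) : ℝ :=
  (1 / 2) * ∑ i, ∑ j, A i j * x i * x j

/-- `s(x) = ½ ∑ a_i x_i²` (i.e. `½ xᵀAx` for `A = diag a`). -/
def sdiag {n : ℕ} (a : Fin n → ℝ) (x : En n) : ℝ :=
  (1 / 2) * ∑ i, a i * x i ^ 2

end

noncomputable section

/-- `ℋ = (k − l)/(2(H − h))`. -/
def calH (k l : ℕ) (H h : ℝ) : ℝ := ((k : ℝ) - l) / (2 * (H - h))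

/-- The defining property of the function `v_α`: for every `s > 0`, `v_α(s) > 1` and
`(v_α(s)^{k−l} − 1) v_α(s)^{2ℋh} = α s^{−ℋ}`. -/
def IsVsol (k l : ℕ) (H h α : ℝ) (v : ℝ → ℝ) : Prop :=
  ∀ s : ℝ, 0 < s → 1 < v s ∧
    (v s ^ (k - l) - 1) * v s ^ (2 * calH k l H h * h) = α * s ^ (-calH k l H h)

/-- `ω_α(x) = β + ∫_{s̄}^{½xᵀAx} v_α(t) dt` for `A = diag a`. -/
def omegaA {n : ℕ} (β sbar : ℝ) (v : ℝ → ℝ) (a : Fin n → ℝ) (x : En n) : ℝ :=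
  β + ∫ t in sbar..(sdiag a x), v t

end

section AuxVLemmas
open scoped Topology

lemma Fmono {m : ℕ} (hm : 1 ≤ m) {c : ℝ} (hc : 0 ≤ c) :
    StrictMonoOn (fun u : ℝ => (u ^ m - 1) * u ^ c) (Set.Ici 1) := by
  intro a ha b hb hab
  simp only [mem_Ici] at ha hb
  have ha0 : (0:ℝ) < a := lt_of_lt_of_le one_pos ha
  have hb0 : (0:ℝ) < b := lt_of_lt_of_le one_pos hb
  have h1 : a ^ m - 1 ≥ 0 := by
    have := one_le_pow₀ ha (n := m); linarith
  have h2 : a ^ m < b ^ m := pow_lt_pow_left₀ hab (le_trans zero_le_one ha) (by omega)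
  have h3 : a ^ c ≤ b ^ c := Real.rpow_le_rpow ha0.le hab.le hc
  have h4 : (0:ℝ) < b ^ c := Real.rpow_pos_of_pos hb0 c
  calc (a ^ m - 1) * a ^ c ≤ (a ^ m - 1) * b ^ c := by nlinarith
    _ < (b ^ m - 1) * b ^ c := by nlinarith

lemma FhasDeriv {m : ℕ} {c u : ℝ} (hu : 0 < u) :
    HasDerivAt (fun u : ℝ => (u ^ m - 1) * u ^ c)
      ((m * u ^ (m - 1)) * u ^ c + (u ^ m - 1) * (c * u ^ (c - 1))) u := by
  have h1 : HasDerivAt (fun u : ℝ => u ^ m - 1) (m * u ^ (m - 1)) u :=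
    (hasDerivAt_pow m u).sub_const 1
  have h2 : HasDerivAt (fun u : ℝ => u ^ c) (c * u ^ (c - 1)) u :=
    Real.hasDerivAt_rpow_const (Or.inl hu.ne')
  exact h1.mul h2

lemma F'pos {m : ℕ} (hm : 1 ≤ m) {c u : ℝ} (hc : 0 ≤ c) (hu : 1 < u) :
    0 < (m * u ^ (m - 1)) * u ^ c + (u ^ m - 1) * (c * u ^ (c - 1)) := by
  have hu0 : (0:ℝ) < u := lt_trans one_pos hu
  have h1 : (0:ℝ) < (m : ℝ) := by exact_mod_cast hm
  have h2 : (0:ℝ) < u ^ (m-1) := pow_pos hu0 _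
  have h3 : (0:ℝ) < u ^ c := Real.rpow_pos_of_pos hu0 c
  have h4 : (0:ℝ) < u ^ (c-1) := Real.rpow_pos_of_pos hu0 _
  have h5 : (0:ℝ) < u ^ m - 1 := by
    have := one_lt_pow₀ hu (by omega : m ≠ 0); linarith
  have h6 : 0 ≤ (u ^ m - 1) * (c * u ^ (c-1)) := by positivity
  nlinarith [mul_pos (mul_pos h1 h2) h3]

lemma vcont {m : ℕ} (hm : 1 ≤ m) {c K α : ℝ} (hc : 0 ≤ c) (hK : 0 < K) (hα : 0 < α)
    {v : ℝ → ℝ}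
    (hv : ∀ s : ℝ, 0 < s → 1 < v s ∧ (v s ^ m - 1) * v s ^ c = α * s ^ (-K)) :
    ContinuousOn v (Set.Ioi 0) := by
  set F : ℝ → ℝ := fun u => (u ^ m - 1) * u ^ c with hF
  intro s₀ hs₀
  rw [mem_Ioi] at hs₀
  apply ContinuousAt.continuousWithinAt
  rw [ContinuousAt, Metric.tendsto_nhds]
  intro ε hε
  obtain ⟨hu₀, hFu₀⟩ := hv s₀ hs₀
  set u₀ := v s₀
  set ε' := min ε ((u₀ - 1)/2) with hε'
  have hε'pos : 0 < ε' := lt_min hε (by linarith)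
  have ha1 : 1 < u₀ - ε' := by
    have : ε' ≤ (u₀-1)/2 := min_le_right _ _
    linarith
  have hFa : F (u₀ - ε') < F u₀ :=
    Fmono hm hc (show u₀ - ε' ∈ Set.Ici 1 from le_of_lt ha1)
      (show u₀ ∈ Set.Ici 1 from le_of_lt hu₀) (by linarith)
  have hFb : F u₀ < F (u₀ + ε') :=
    Fmono hm hc (show u₀ ∈ Set.Ici 1 from le_of_lt hu₀)
      (show u₀ + ε' ∈ Set.Ici 1 from by simp only [Set.mem_Ici]; linarith) (by linarith)
  -- g s := α * s ^ (-K) is continuous at s₀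
  have hg : ContinuousAt (fun s : ℝ => α * s ^ (-K)) s₀ :=
    (Real.continuousAt_rpow_const s₀ (-K) (Or.inl hs₀.ne')).const_smul α
  have hmem : (fun s : ℝ => α * s ^ (-K)) s₀ ∈ Set.Ioo (F (u₀ - ε')) (F (u₀ + ε')) := by
    dsimp only; rw [← hFu₀]; exact ⟨hFa, hFb⟩
  have hev : ∀ᶠ s in 𝓝 s₀, (α * s ^ (-K)) ∈ Set.Ioo (F (u₀ - ε')) (F (u₀ + ε')) :=
    hg (isOpen_Ioo.mem_nhds hmem)
  have hev2 : ∀ᶠ s in 𝓝 s₀, (0:ℝ) < s := eventually_gt_nhds hs₀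
  filter_upwards [hev, hev2] with s h1 h2
  obtain ⟨hus, hFus⟩ := hv s h2
  rw [← hFus] at h1
  have hlo : u₀ - ε' < v s := by
    by_contra hcon
    push_neg at hcon
    have := (Fmono hm hc).monotoneOn (show v s ∈ Set.Ici 1 from le_of_lt hus)
      (show u₀ - ε' ∈ Set.Ici 1 from le_of_lt ha1) hcon
    simp only [hF] at this h1
    linarith [h1.1]
  have hhi : v s < u₀ + ε' := by
    by_contra hcon
    push_neg at hcon
    have := (Fmono hm hc).monotoneOn
      (show u₀ + ε' ∈ Set.Ici 1 from by simp only [Set.mem_Ici]; linarith)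
      (show v s ∈ Set.Ici 1 from le_of_lt hus) hcon
    simp only [hF] at this h1
    linarith [h1.2]
  have : |v s - u₀| < ε' := abs_lt.mpr ⟨by linarith, by linarith⟩
  have hε'le : ε' ≤ ε := min_le_left _ _
  rw [Real.dist_eq]
  linarith

lemma vderiv {m : ℕ} (hm : 1 ≤ m) {c K α : ℝ} (hc : 0 ≤ c) (hK : 0 < K) (hα : 0 < α)
    {v : ℝ → ℝ}
    (hv : ∀ s : ℝ, 0 < s → 1 < v s ∧ (v s ^ m - 1) * v s ^ c = α * s ^ (-K))
    {s : ℝ} (hs : 0 < s) :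
    HasDerivAt v (-K * α * s ^ (-K - 1) /
      ((m * v s ^ (m - 1)) * v s ^ c + (v s ^ m - 1) * (c * v s ^ (c - 1)))) s := by
  obtain ⟨hu, hFu⟩ := hv s hs
  have hu0 : (0:ℝ) < v s := lt_trans one_pos hu
  set F' : ℝ := (m * v s ^ (m - 1)) * v s ^ c + (v s ^ m - 1) * (c * v s ^ (c - 1)) with hF'
  have hF'pos : 0 < F' := F'pos hm hc hu
  have hFpos : 0 < (v s ^ m - 1) * v s ^ c := by
    rw [hFu]; positivity
  -- inner function u ↦ F u / α
  have hinner : HasDerivAt (fun u : ℝ => ((u ^ m - 1) * u ^ c) / α) (F' / α) (v s) :=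
    (FhasDeriv hu0).div_const α
  have houter : HasDerivAt (fun t : ℝ => t ^ (-K⁻¹))
      (-K⁻¹ * (((v s ^ m - 1) * v s ^ c) / α) ^ (-K⁻¹ - 1)) (((v s ^ m - 1) * v s ^ c) / α) :=
    Real.hasDerivAt_rpow_const (Or.inl (by positivity))
  have hΦ : HasDerivAt (fun u : ℝ => (((u ^ m - 1) * u ^ c) / α) ^ (-K⁻¹))
      ((-K⁻¹ * (((v s ^ m - 1) * v s ^ c) / α) ^ (-K⁻¹ - 1)) * (F' / α)) (v s) := by
    have hcomp := houter.comp (v s) hinner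
    exact hcomp
  set Φ' : ℝ := (-K⁻¹ * (((v s ^ m - 1) * v s ^ c) / α) ^ (-K⁻¹ - 1)) * (F' / α) with hΦ'
  have hΦ'ne : Φ' ≠ 0 := by
    have h1 : (0:ℝ) < (((v s ^ m - 1) * v s ^ c) / α) ^ (-K⁻¹ - 1) :=
      Real.rpow_pos_of_pos (by positivity) _
    have h2 : (0:ℝ) < K⁻¹ := inv_pos.mpr hK
    have : Φ' < 0 := by
      rw [hΦ']
      apply mul_neg_of_neg_of_pos
      · nlinarith
      · positivity
    exact this.ne
  have hcontAt : ContinuousAt v s :=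
    (vcont hm hc hK hα hv).continuousAt (Ioi_mem_nhds hs)
  have hfg : ∀ᶠ y in 𝓝 s, (((v y ^ m - 1) * v y ^ c) / α) ^ (-K⁻¹) = y := by
    filter_upwards [Ioi_mem_nhds hs] with y hy
    obtain ⟨huy, hFy⟩ := hv y hy
    rw [mem_Ioi] at hy
    rw [hFy, mul_comm α (y ^ (-K)), mul_div_assoc, div_self hα.ne', mul_one]
    rw [← Real.rpow_mul hy.le]
    rw [show (-K) * -K⁻¹ = 1 by field_simp]
    exact Real.rpow_one y
  have hdv : HasDerivAt v Φ'⁻¹ s := HasDerivAt.of_local_left_inverse hcontAt hΦ hΦ'ne hfg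
  -- chain rule to identify Φ'⁻¹
  have hFv : HasDerivAt (fun y => (v y ^ m - 1) * v y ^ c) (F' * Φ'⁻¹) s :=
    (FhasDeriv hu0).comp s hdv
  have hrhs : HasDerivAt (fun y : ℝ => α * y ^ (-K)) (α * (-K * s ^ (-K - 1))) s :=
    (Real.hasDerivAt_rpow_const (Or.inl hs.ne')).const_mul α
  have hEq : (fun y => (v y ^ m - 1) * v y ^ c) =ᶠ[𝓝 s] (fun y : ℝ => α * y ^ (-K)) := by
    filter_upwards [Ioi_mem_nhds hs] with y hy
    exact (hv y hy).2
  have hFv2 : HasDerivAt (fun y => (v y ^ m - 1) * v y ^ c) (α * (-K * s ^ (-K - 1))) s :=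
    hrhs.congr_of_eventuallyEq hEq
  have huniq : F' * Φ'⁻¹ = α * (-K * s ^ (-K - 1)) := hFv.unique hFv2
  have h2 : Φ'⁻¹ = α * (-K * s ^ (-K - 1)) / F' := by
    rw [eq_div_iff hF'pos.ne', mul_comm]; exact huniq
  have h3 : -K * α * s ^ (-K - 1) / F' = Φ'⁻¹ := by
    rw [h2]; ring
  rw [h3]; exact hdv

end AuxVLemmas

section MainThm
open scoped Topology
/-- `w(s) = β + ∫_{s̄}^s v_α` solves the ODE (2.8):
`(w')^k + 2w''(w')^{k−1}Hs − (w')^l − 2w''(w')^{l−1}hs = 0`, with `w' > 1 > 0`, `w'' < 0`. -/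
theorem w_solves_ode
    (n k l : ℕ) (hl1 : 1 ≤ l) (hlk : l < k) (hkn : k ≤ n)
    (H h : ℝ) (hh : 0 ≤ h) (hHh : h < H)
    (α : ℝ) (hα : 0 < α) (β sbar : ℝ) (hsbar : 0 < sbar)
    (v : ℝ → ℝ) (hv : IsVsol k l H h α v) :
    ContDiffOn ℝ 2 (fun s => β + ∫ t in sbar..s, v t) (Set.Ioi (0 : ℝ)) ∧
    ∀ s : ℝ, 0 < s →
      1 < deriv (fun s' => β + ∫ t in sbar..s', v t) s ∧
      deriv (deriv (fun s' => β + ∫ t in sbar..s', v t)) s < 0 ∧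
      deriv (fun s' => β + ∫ t in sbar..s', v t) s ^ k +
          2 * deriv (deriv (fun s' => β + ∫ t in sbar..s', v t)) s *
            deriv (fun s' => β + ∫ t in sbar..s', v t) s ^ (k - 1) * H * s -
          deriv (fun s' => β + ∫ t in sbar..s', v t) s ^ l -
          2 * deriv (deriv (fun s' => β + ∫ t in sbar..s', v t)) s *
            deriv (fun s' => β + ∫ t in sbar..s', v t) s ^ (l - 1) * h * s = 0 := by
  set m : ℕ := k - l with hmdef
  set K : ℝ := calH k l H h with hKdef
  set c : ℝ := 2 * K * h with hcdef
  have hm : 1 ≤ m := by omega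
  have hmcast : (m : ℝ) = (k : ℝ) - l := by
    rw [hmdef]; push_cast [Nat.cast_sub hlk.le]; ring
  have hmpos : (0:ℝ) < m := by exact_mod_cast hm
  have hHh2 : (0:ℝ) < H - h := by linarith
  have hK : 0 < K := by
    rw [hKdef, calH]; apply div_pos (by linarith) (by linarith)
  have hc : 0 ≤ c := by rw [hcdef]; positivity
  have hKrel : 2 * (H - h) * K = (m:ℝ) := by
    rw [hKdef, calH, hmcast]; field_simp
  have hv' : ∀ s : ℝ, 0 < s → 1 < v s ∧ (v s ^ m - 1) * v s ^ c = α * s ^ (-K) := hv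
  have hvcont : ContinuousOn v (Set.Ioi 0) := vcont hm hc hK hα hv'
  set vD : ℝ → ℝ := fun s => -K * α * s ^ (-K - 1) /
      ((m * v s ^ (m - 1)) * v s ^ c + (v s ^ m - 1) * (c * v s ^ (c - 1))) with hvDdef
  have hvd : ∀ s : ℝ, 0 < s → HasDerivAt v (vD s) s := fun s hs => vderiv hm hc hK hα hv' hs
  set W : ℝ → ℝ := fun s' => β + ∫ t in sbar..s', v t with hWdef
  have hW : ∀ s : ℝ, 0 < s → HasDerivAt W (v s) s := by
    intro s hs
    have h1 : Set.uIcc sbar s ⊆ Set.Ioi 0 := by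
      intro x hx
      rw [Set.mem_uIcc] at hx
      rw [Set.mem_Ioi]
      rcases hx with ⟨h2, _⟩ | ⟨h2, _⟩ <;> linarith
    have hint : IntervalIntegrable v MeasureTheory.volume sbar s :=
      (hvcont.mono h1).intervalIntegrable
    have hmeas := hvcont.stronglyMeasurableAtFilter (μ := MeasureTheory.volume) isOpen_Ioi s hs
    exact (intervalIntegral.integral_hasDerivAt_right hint hmeas
      (hvcont.continuousAt (Ioi_mem_nhds hs))).const_add β
  have hderivW : Set.EqOn (deriv W) v (Set.Ioi 0) := fun s hs => (hW s hs).deriv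
  have hder2 : ∀ s : ℝ, 0 < s → deriv (deriv W) s = vD s := by
    intro s hs
    have hev : deriv W =ᶠ[𝓝 s] v := Filter.eventuallyEq_of_mem (Ioi_mem_nhds hs) hderivW
    rw [hev.deriv_eq]
    exact (hvd s hs).deriv
  have hvDneg : ∀ s : ℝ, 0 < s → vD s < 0 := by
    intro s hs
    have hu := (hv' s hs).1
    apply div_neg_of_neg_of_pos
    · have h6 : (0:ℝ) < s ^ (-K - 1) := Real.rpow_pos_of_pos hs _
      nlinarith [mul_pos (mul_pos hK hα) h6]
    · exact F'pos hm hc hu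
  have hvDcont : ContinuousOn vD (Set.Ioi 0) := by
    apply ContinuousOn.div
    · exact continuousOn_const.mul (continuousOn_id.rpow_const
        (fun x hx => Or.inl (ne_of_gt hx)))
    · apply ContinuousOn.add
      · exact (continuousOn_const.mul (hvcont.pow _)).mul
          (hvcont.rpow_const (fun x hx => Or.inl (ne_of_gt (lt_trans one_pos (hv' x hx).1))))
      · exact ((hvcont.pow _).sub continuousOn_const).mul
          (continuousOn_const.mul
            (hvcont.rpow_const (fun x hx => Or.inl (ne_of_gt (lt_trans one_pos (hv' x hx).1)))))
    · exact fun x hx => (F'pos hm hc (hv' x hx).1).ne'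
  constructor
  · -- ContDiffOn
    have h2 : ContDiffOn ℝ 1 v (Set.Ioi 0) := by
      refine (contDiffOn_succ_iff_deriv_of_isOpen (n := 0) isOpen_Ioi).mpr
        ⟨fun s hs => (hvd s hs).differentiableAt.differentiableWithinAt, by simp, ?_⟩
      rw [contDiffOn_zero]
      apply hvDcont.congr
      exact fun s hs => (hvd s hs).deriv
    refine (contDiffOn_succ_iff_deriv_of_isOpen (n := 1) isOpen_Ioi).mpr
      ⟨fun s hs => (hW s hs).differentiableAt.differentiableWithinAt, by simp, ?_⟩
    exact h2.congr hderivW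
  · intro s hs
    have hder1 : deriv W s = v s := hderivW hs
    obtain ⟨hu, hFu⟩ := hv' s hs
    have hu0 : (0:ℝ) < v s := lt_trans one_pos hu
    set u : ℝ := v s with hudef
    set X : ℝ := u ^ m with hXdef
    set P : ℝ := u ^ c with hPdef
    have hX1 : 1 < X := one_lt_pow₀ hu (by omega)
    have hPpos : 0 < P := Real.rpow_pos_of_pos hu0 c
    refine ⟨by rw [hder1]; exact hu, by rw [hder2 s hs]; exact hvDneg s hs, ?_⟩
    rw [hder1, hder2 s hs]
    set D : ℝ := vD s with hDdef
    -- key equation E0 : D * F' = -K * α * s ^ (-K-1)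
    have hF'pos := F'pos hm hc hu
    have E0 : D * ((m * u ^ (m - 1)) * P + (X - 1) * (c * u ^ (c - 1)))
        = -K * α * s ^ (-K - 1) := by
      rw [hDdef, hvDdef]
      exact div_mul_cancel₀ _ hF'pos.ne'
    have A1 : u ^ (m - 1) * u = X := by
      rw [hXdef, ← pow_succ]; congr 1; omega
    have A2 : u ^ (c - 1) * u = P := by
      rw [hPdef, Real.rpow_sub_one hu0.ne', div_mul_cancel₀ _ hu0.ne']
    have A3 : s ^ (-K - 1) * s = s ^ (-K) := by
      rw [Real.rpow_sub_one hs.ne', div_mul_cancel₀ _ hs.ne']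
    have A4 : α * s ^ (-K) = (X - 1) * P := hFu.symm
    -- e2' : with the P factor
    have e2' : (D * s * ((m : ℝ) * X + c * (X - 1))) * P = (-K * (X - 1) * u) * P := by
      linear_combination (u * s) * E0 - D * s * (m:ℝ) * P * A1 - D * s * c * (X - 1) * A2
        - K * u * α * A3 - K * u * A4
    have e2 : D * s * ((m : ℝ) * X + c * (X - 1)) = -K * (X - 1) * u :=
      mul_right_cancel₀ hPpos.ne' e2'
    have key : u * (X - 1) + 2 * D * s * (H * X - h) = 0 := by
      have h5 : (m:ℝ) * (u * (X - 1) + 2 * D * s * (H * X - h)) = 0 := by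
        rw [hcdef] at e2
        linear_combination (2 * (H - h)) * e2 - (2 * D * s * h * (X - 1) + (X - 1) * u) * hKrel
      exact (mul_eq_zero.mp h5).resolve_left hmpos.ne'
    have B1 : u ^ k = u ^ (l - 1) * u * X := by
      rw [hXdef, show k = ((l-1)+1)+m by omega, pow_add, pow_add, pow_one]
    have B2 : u ^ (k - 1) = u ^ (l - 1) * X := by
      rw [hXdef, show k - 1 = (l-1)+m by omega, pow_add]
    have B3 : u ^ l = u ^ (l - 1) * u := by
      conv_lhs => rw [show l = (l-1)+1 by omega]
      rw [pow_add, pow_one]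
    rw [B1, B2, B3]
    linear_combination (u ^ (l - 1)) * key

end MainThm
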